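/- Uniqueness of symmetric-positive-definite linear transport between Gaussians: if M is a symmetric positive definite n×n matrix with M Σ₀ Mᵀ = Σ₁, where Σ₀, Σ₁ are symmetric positive definite, then M = Σ₀^{-1/2}(Σ₀^{1/2} Σ₁ Σ₀^{1/2})^{1/2} Σ₀^{-1/2}. -/

import Mathlib

open Matrix

/-- Uniqueness of the symmetric positive definite linear transport between
Gaussians: if M is symmetric positive definite with M Σ₀ Mᵀ = Σ₁ then
M = Σ₀^{-1/2}(Σ₀^{1/2} Σ₁ Σ₀^{1/2})^{1/2} Σ₀^{-1/2}, where S = Σ₀^{1/2} and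
R = (S Σ₁ S)^{1/2}. -/
theorem stmt_14 {n : ℕ} (Sigma0 Sigma1 M S R : Matrix (Fin n) (Fin n) ℝ)
    (h0 : Sigma0.PosDef) (h0s : Sigma0.IsSymm) (h1 : Sigma1.PosDef) (h1s : Sigma1.IsSymm)
    (hM : M.PosDef) (hMs : M.IsSymm) (hpush : M * Sigma0 * Mᵀ = Sigma1)
    (hS : S.PosDef) (hSs : S.IsSymm) (hSsq : S * S = Sigma0)
    (hR : R.PosDef) (hRs : R.IsSymm) (hRsq : R * R = S * Sigma1 * S) :
    M = S⁻¹ * R * S⁻¹ := by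
  have hSH : Sᴴ = S := by
    rw [conjTranspose_eq_transpose_of_trivial]; exact hSs
  have hN : (S * M * S).PosSemidef := by
    have := hM.posSemidef.mul_mul_conjTranspose_same S
    rwa [hSH] at this
  have hMT : Mᵀ = M := hMs
  have hsq : (S * M * S) ^ 2 = R ^ 2 := by
    have : S * M * S * (S * M * S) = S * Sigma1 * S := by
      calc S * M * S * (S * M * S) = S * (M * (S * S) * M) * S := by
            simp [Matrix.mul_assoc]
        _ = S * Sigma1 * S := by
            rw [hSsq]; nth_rewrite 2 [← hMT]; rw [hpush]
    rw [pow_two, pow_two, this, hRsq]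
  have hNR : S * M * S = R := by
    open scoped MatrixOrder Matrix.Norms.L2Operator in
    exact (CFC.sq_eq_sq_iff _ _ hN.nonneg hR.posSemidef.nonneg).mp hsq
  have hSinv : S⁻¹ * S = 1 := nonsing_inv_mul S hS.det_pos.ne'.isUnit
  have hSinv' : S * S⁻¹ = 1 := mul_nonsing_inv S hS.det_pos.ne'.isUnit
  calc M = S⁻¹ * (S * M * S) * S⁻¹ := by
        rw [← Matrix.mul_assoc, ← Matrix.mul_assoc, hSinv, Matrix.one_mul,
          Matrix.mul_assoc, hSinv', Matrix.mul_one]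
    _ = S⁻¹ * R * S⁻¹ := by rw [hNR]
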